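/- Fix integers $r \geq 3$, $\ell \geq 3$ and let $L$ be a linear $r$-graph with $e_L = i$ edges for some $3 \leq i \leq \ell$ spanning at most $(r-1)i$ vertices, such that $L$ contains no subhypergraph $G \subsetneq L$ with $3 \leq e_G < i$ edges on at most $(r-1)e_G$ vertices. Then $L$ is isomorphic to the $r$-uniform linear cycle $C_i^r$; in particular $v_L = (r-1)i$ exactly. -/

import Mathlib

/-- A hypergraph is linear if any two distinct edges share at most one vertex. -/
def IsLinearHG {V : Type*} [DecidableEq V] (G : Finset (Finset V)) : Prop :=
  ∀ e ∈ G, ∀ f ∈ G, e ≠ f → (e ∩ f).card ≤ 1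

/-- `L` is an `r`-uniform linear cycle: its edges admit a cyclic ordering in which
consecutive edges share exactly one vertex and nonconsecutive edges are disjoint. -/
def IsLinCycle {V : Type*} [DecidableEq V] (r : ℕ) (L : Finset (Finset V)) : Prop :=
  ∃ e : ℕ → Finset V,
    L = (Finset.range L.card).image e ∧
    (∀ j < L.card, ∀ j' < L.card, j ≠ j' → e j ≠ e j') ∧
    (∀ j < L.card, (e j).card = r) ∧
    (∀ j < L.card, (e j ∩ e ((j + 1) % L.card)).card = 1) ∧
    (∀ j < L.card, ∀ j' < L.card, j ≠ j' → j' ≠ (j + 1) % L.card →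
      j ≠ (j' + 1) % L.card → e j ∩ e j' = ∅)

section
variable {V : Type*} [DecidableEq V]

def IsBP (L : Finset (Finset V)) (c : ℕ) (F : ℕ → Finset V) (w : ℕ → V) : Prop :=
  (∀ j < c, F j ∈ L) ∧ (∀ j < c, ∀ k < c, j ≠ k → F j ≠ F k) ∧
  (∀ j, j + 1 < c → ∀ k, k + 1 < c → j ≠ k → w j ≠ w k) ∧
  (∀ j, j + 1 < c → w j ∈ F j ∩ F (j + 1))

def IsBC (L : Finset (Finset V)) (c : ℕ) (F : ℕ → Finset V) (w : ℕ → V) : Prop :=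
  (∀ j < c, F j ∈ L) ∧ (∀ j < c, ∀ k < c, j ≠ k → F j ≠ F k) ∧
  (∀ j < c, ∀ k < c, j ≠ k → w j ≠ w k) ∧
  (∀ j < c, w j ∈ F j ∩ F ((j + 1) % c))

lemma close_path {L : Finset (Finset V)} {c : ℕ} {F : ℕ → Finset V} {w : ℕ → V}
    (h : IsBP L c F w) {s : ℕ} (hs : s + 1 < c) {x : V}
    (hx : x ∈ F (c - 1) ∩ F s) (hxw : ∀ t, s ≤ t → t + 1 < c → x ≠ w t) :
    ∃ m F' w', 2 ≤ m ∧ IsBC L m F' w' := by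
  obtain ⟨hmem, hFinj, hwinj, hlink⟩ := h
  refine ⟨c - s, fun k => F (s + k), fun k => if k = c - s - 1 then x else w (s + k), ?_, ?_, ?_, ?_, ?_⟩
  · omega
  · intro j hj; exact hmem _ (by omega)
  · intro j hj k hk hjk; exact hFinj _ (by omega) _ (by omega) (by omega)
  · intro j hj k hk hjk
    dsimp only
    by_cases h1 : j = c - s - 1 <;> by_cases h2 : k = c - s - 1
    · omega
    · rw [if_pos h1, if_neg h2]; exact hxw _ (by omega) (by omega)
    · rw [if_neg h1, if_pos h2]
      exact fun hh => hxw _ (by omega) (by omega) hh.symm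
    · rw [if_neg h1, if_neg h2]
      exact hwinj _ (by omega) _ (by omega) (by omega)
  · intro j hj
    dsimp only
    by_cases h1 : j = c - s - 1
    · rw [if_pos h1, h1]
      have e1 : s + (c - s - 1) = c - 1 := by omega
      have e2 : (c - s - 1 + 1) % (c - s) = 0 := by
        have : c - s - 1 + 1 = c - s := by omega
        rw [this, Nat.mod_self]
      rw [e1, e2]
      simpa using hx
    · rw [if_neg h1]
      have e2 : (j + 1) % (c - s) = j + 1 := Nat.mod_eq_of_lt (by omega)
      rw [e2]
      have := hlink (s + j) (by omega)
      have e3 : s + j + 1 = s + (j + 1) := by omega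
      rw [e3] at this
      exact this

end

section
variable {V : Type*} [DecidableEq V]

lemma bp_le_card' {L : Finset (Finset V)} {c F w} (h : IsBP L c F w) : c ≤ L.card := by
  have hsub : (Finset.range c).image F ⊆ L := by
    intro x hx
    simp only [Finset.mem_image, Finset.mem_range] at hx
    obtain ⟨j, hj, rfl⟩ := hx
    exact h.1 j hj
  have hcard : ((Finset.range c).image F).card = c := by
    rw [Finset.card_image_of_injOn, Finset.card_range]
    intro a ha b hb hab
    simp only [Finset.mem_coe, Finset.mem_range] at ha hb
    by_contra hne
    exact h.2.1 a ha b hb hne hab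
  calc c = ((Finset.range c).image F).card := hcard.symm
    _ ≤ L.card := Finset.card_le_card hsub

open Classical in
lemma exists_bc {L : Finset (Finset V)} (hne : L.Nonempty)
    (hmd : ∀ f ∈ L, 2 ≤ (f ∩ ((L.erase f).biUnion id)).card) :
    ∃ c F w, 2 ≤ c ∧ IsBC L c F w := by
  classical
  set P : ℕ → Prop := fun c => ∃ F w, IsBP L c F w with hP
  have hP1 : P 1 := by
    obtain ⟨f, hf⟩ := hne
    have h2 := hmd f hf
    have hcpos : (f ∩ ((L.erase f).biUnion id)).Nonempty := by
      rw [← Finset.card_pos]; omega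
    obtain ⟨x, _⟩ := hcpos
    exact ⟨fun _ => f, fun _ => x, fun j hj => hf, by omega, by omega, by omega⟩
  have hLpos : 1 ≤ L.card := Finset.card_pos.mpr hne
  set c := Nat.findGreatest P L.card with hc
  have hPc : P c := Nat.findGreatest_spec hLpos hP1
  have hc1 : 1 ≤ c := Nat.le_findGreatest hLpos hP1
  have hmax : ¬ P (c + 1) := by
    by_cases hle : c + 1 ≤ L.card
    · exact Nat.findGreatest_is_greatest (by omega) hle
    · intro ⟨F, w, hFw⟩
      exact hle (bp_le_card' hFw)
  obtain ⟨F, w, hp⟩ := hPc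
  obtain ⟨hmem, hFinj, hwinj, hlink⟩ := hp
  have hf : F (c - 1) ∈ L := hmem _ (by omega)
  have h2 := hmd _ hf
  by_cases hA : ∃ t, t + 2 < c ∧ w t ∈ F (c - 1)
  · obtain ⟨t, ht, hwt⟩ := hA
    refine close_path ⟨hmem, hFinj, hwinj, hlink⟩ (s := t + 1) (by omega) (x := w t) ?_ ?_
    · have := hlink t (by omega)
      simp only [Finset.mem_inter] at this ⊢
      exact ⟨hwt, this.2⟩
    · intro t' ht' ht'' ; exact hwinj t (by omega) t' (by omega) (by omega)
  · push_neg at hA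
    -- pick x ∈ F (c-1) ∩ U with x ≠ w (c - 2) when c ≥ 2
    obtain ⟨x1, hx1, x2, hx2, hx12⟩ := Finset.one_lt_card.mp (by omega : 1 < (F (c-1) ∩ ((L.erase (F (c-1))).biUnion id)).card)
    obtain ⟨x, hxmem, hxne⟩ : ∃ x ∈ F (c-1) ∩ ((L.erase (F (c-1))).biUnion id), x ≠ w (c - 2) := by
      by_cases h1 : x1 = w (c - 2)
      · exact ⟨x2, hx2, by rw [← h1]; exact fun hh => hx12 hh.symm⟩
      · exact ⟨x1, hx1, h1⟩
    have hxF : x ∈ F (c - 1) := (Finset.mem_inter.mp hxmem).1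
    have hxU : x ∈ (L.erase (F (c-1))).biUnion id := (Finset.mem_inter.mp hxmem).2
    obtain ⟨g, hg, hxg⟩ := Finset.mem_biUnion.mp hxU
    have hgL : g ∈ L := Finset.mem_of_mem_erase hg
    have hgne : g ≠ F (c - 1) := Finset.ne_of_mem_erase hg
    have hxw : ∀ t, t + 1 < c → x ≠ w t := by
      intro t ht
      by_cases h2' : t + 2 < c
      · intro hh; exact hA t h2' (hh ▸ hxF)
      · have : t = c - 2 := by omega
        rw [this]; exact hxne
    by_cases hB : ∃ t < c, F t = g
    · obtain ⟨t, ht, hFt⟩ := hB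
      have htne : t ≠ c - 1 := fun hh => hgne (by rw [← hFt, hh])
      refine close_path ⟨hmem, hFinj, hwinj, hlink⟩ (s := t) (by omega) (x := x) ?_ ?_
      · simp only [Finset.mem_inter]; exact ⟨hxF, hFt ▸ hxg⟩
      · intro t' _ ht''; exact hxw t' ht''
    · push_neg at hB
      exfalso
      apply hmax
      refine ⟨fun j => if j = c then g else F j, fun j => if j = c - 1 then x else w j, ?_, ?_, ?_, ?_⟩
      · intro j hj
        dsimp only
        by_cases h1 : j = c
        · rw [if_pos h1]; exact hgL
        · rw [if_neg h1]; exact hmem j (by omega)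
      · intro j hj k hk hjk
        dsimp only
        by_cases h1 : j = c <;> by_cases h2 : k = c
        · omega
        · rw [if_pos h1, if_neg h2]; exact fun hh => hB k (by omega) hh.symm
        · rw [if_neg h1, if_pos h2]; exact hB j (by omega)
        · rw [if_neg h1, if_neg h2]; exact hFinj j (by omega) k (by omega) hjk
      · intro j hj k hk hjk
        dsimp only
        by_cases h1 : j = c - 1 <;> by_cases h2 : k = c - 1
        · omega
        · rw [if_pos h1, if_neg h2]; exact hxw k (by omega)
        · rw [if_neg h1, if_pos h2]; exact fun hh => hxw j (by omega) hh.symm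
        · rw [if_neg h1, if_neg h2]; exact hwinj j (by omega) k (by omega) hjk
      · intro j hj
        dsimp only
        by_cases h1 : j = c - 1
        · rw [if_pos h1, h1]
          rw [if_neg (by omega : ¬ c - 1 = c), if_pos (by omega : c - 1 + 1 = c)]
          simp only [Finset.mem_inter]
          exact ⟨hxF, hxg⟩
        · rw [if_neg h1, if_neg (by omega : ¬ j = c), if_neg (by omega : ¬ j + 1 = c)]
          exact hlink j (by omega)

end

section
variable {V : Type*} [DecidableEq V]

lemma bc_length_three {L : Finset (Finset V)} (hlin : IsLinearHG L) {c F w}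
    (hbc : IsBC L c F w) (hc2 : 2 ≤ c) : 3 ≤ c := by
  obtain ⟨hmem, hFinj, hwinj, hlink⟩ := hbc
  rcases Nat.lt_or_ge c 3 with h3 | h3
  · exfalso
    have hc : c = 2 := by omega
    subst hc
    have h0 := hlink 0 (by omega)
    have h1 := hlink 1 (by omega)
    norm_num at h0 h1
    have hne : F 0 ≠ F 1 := hFinj 0 (by omega) 1 (by omega) (by omega)
    have hcard := hlin (F 0) (hmem 0 (by omega)) (F 1) (hmem 1 (by omega)) hne
    have hsub : {w 0, w 1} ⊆ F 0 ∩ F 1 := by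
      intro x hx
      simp only [Finset.mem_insert, Finset.mem_singleton] at hx
      rcases hx with rfl | rfl
      · exact Finset.mem_inter.mpr ⟨h0.1, h0.2⟩
      · exact Finset.mem_inter.mpr ⟨h1.2, h1.1⟩
    have : ({w 0, w 1} : Finset V).card = 2 := by
      rw [Finset.card_insert_of_notMem (by simpa using hwinj 0 (by omega) 1 (by omega) (by omega)), Finset.card_singleton]
    have := Finset.card_le_card hsub
    omega
  · exact h3

/-- In a minimal Berge cycle, nonconsecutive edges are disjoint. -/
lemma bc_nonconsec {L : Finset (Finset V)} {c F w}
    (hbc : IsBC L c F w) (hc3 : 3 ≤ c)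
    (hminimal : ∀ m (F' : ℕ → Finset V) (w' : ℕ → V), 2 ≤ m → IsBC L m F' w' → c ≤ m)
    {a b : ℕ} (hab : a < b) (hbc' : b < c) (h1 : b ≠ a + 1)
    (h2 : ¬(a = 0 ∧ b = c - 1)) {x : V} (hx : x ∈ F a ∩ F b) : False := by
  obtain ⟨hmem, hFinj, hwinj, hlink⟩ := hbc
  have hxa : x ∈ F a := (Finset.mem_inter.mp hx).1
  have hxb : x ∈ F b := (Finset.mem_inter.mp hx).2
  by_cases hA : ∀ t, a ≤ t → t < b → x ≠ w t
  · -- short cycle along the segment [a, b]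
    set m := b - a + 1 with hm
    have hmlt : m < c := by omega
    have : IsBC L m (fun k => F (a + k)) (fun k => if k = m - 1 then x else w (a + k)) := by
      refine ⟨?_, ?_, ?_, ?_⟩
      · intro j hj; exact hmem _ (by omega)
      · intro j hj k hk hjk; exact hFinj _ (by omega) _ (by omega) (by omega)
      · intro j hj k hk hjk
        dsimp only
        by_cases e1 : j = m - 1 <;> by_cases e2 : k = m - 1
        · omega
        · rw [if_pos e1, if_neg e2]; exact hA _ (by omega) (by omega)
        · rw [if_neg e1, if_pos e2]
          exact fun hh => hA _ (by omega) (by omega) hh.symm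
        · rw [if_neg e1, if_neg e2]
          exact hwinj _ (by omega) _ (by omega) (by omega)
      · intro j hj
        dsimp only
        by_cases e1 : j = m - 1
        · rw [if_pos e1, e1]
          have g1 : a + (m - 1) = b := by omega
          have g2 : (m - 1 + 1) % m = 0 := by
            have : m - 1 + 1 = m := by omega
            rw [this, Nat.mod_self]
          rw [g1, g2]
          simpa using ⟨hxb, hxa⟩
        · rw [if_neg e1]
          have g2 : (j + 1) % m = j + 1 := Nat.mod_eq_of_lt (by omega)
          rw [g2]
          have := hlink (a + j) (by omega)
          have g3 : (a + j + 1) % c = a + j + 1 := Nat.mod_eq_of_lt (by omega)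
          rw [g3] at this
          have g4 : a + (j + 1) = a + j + 1 := by omega
          rw [g4]
          exact this
    exact absurd (hminimal _ _ _ (by omega) this) (by omega)
  · push_neg at hA
    obtain ⟨t, hta, htb, hxt⟩ := hA
    -- short cycle along the complementary segment [b, c) ∪ [0, a]
    set m := c - b + a + 1 with hm
    have hmlt : m < c := by omega
    have hmc : m ≤ c := by omega
    have hmod : ∀ k, k ≤ c → (b + k) % c = if b + k < c then b + k else b + k - c := by
      intro k hk
      split_ifs with h
      · exact Nat.mod_eq_of_lt h
      · have h1' : b + k - c < c := by omega
        have h2' : b + k = (b + k - c) + c := by omega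
        rw [h2', Nat.add_mod_right, Nat.mod_eq_of_lt h1']
        omega
    have hidx : ∀ k, k < m → (b + k) % c < c := fun k hk => Nat.mod_lt _ (by omega)
    have hinj : ∀ j < m, ∀ k < m, j ≠ k → (b + j) % c ≠ (b + k) % c := by
      intro j hj k hk hjk
      rw [hmod j (by omega), hmod k (by omega)]
      split_ifs <;> omega
    have hnotin : ∀ k, k < m - 1 → (b + k) % c < a ∨ b ≤ (b + k) % c := by
      intro k hk
      rw [hmod k (by omega)]
      split_ifs <;> omega
    have : IsBC L m (fun k => F ((b + k) % c)) (fun k => if k = m - 1 then x else w ((b + k) % c)) := by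
      refine ⟨?_, ?_, ?_, ?_⟩
      · intro j hj; exact hmem _ (hidx j hj)
      · intro j hj k hk hjk; exact hFinj _ (hidx j hj) _ (hidx k hk) (hinj j hj k hk hjk)
      · intro j hj k hk hjk
        dsimp only
        have key : ∀ k', k' < m - 1 → x ≠ w ((b + k') % c) := by
          intro k' hk'
          rw [hxt]
          refine hwinj t (by omega) _ (hidx k' (by omega)) ?_
          rcases hnotin k' hk' with h | h <;> omega
        by_cases e1 : j = m - 1 <;> by_cases e2 : k = m - 1
        · omega
        · rw [if_pos e1, if_neg e2]; exact key k (by omega)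
        · rw [if_neg e1, if_pos e2]; exact fun hh => key j (by omega) hh.symm
        · rw [if_neg e1, if_neg e2]
          exact hwinj _ (hidx j hj) _ (hidx k hk) (hinj j hj k hk hjk)
      · intro j hj
        dsimp only
        by_cases e1 : j = m - 1
        · rw [if_pos e1, e1]
          have g1 : (b + (m - 1)) % c = a := by
            rw [hmod (m - 1) (by omega)]
            split_ifs <;> omega
          have g2 : (m - 1 + 1) % m = 0 := by
            have : m - 1 + 1 = m := by omega
            rw [this, Nat.mod_self]
          have g3 : (b + 0) % c = b := by
            rw [hmod 0 (by omega)]; split_ifs <;> omega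
          rw [g1, g2, g3]
          simpa using ⟨hxa, hxb⟩
        · rw [if_neg e1]
          have g2 : (j + 1) % m = j + 1 := Nat.mod_eq_of_lt (by omega)
          rw [g2]
          have := hlink ((b + j) % c) (hidx j hj)
          have g3 : ((b + j) % c + 1) % c = (b + (j + 1)) % c := by
            rw [Nat.mod_add_mod]
            ring_nf
          rw [g3] at this
          exact this
    exact absurd (hminimal _ _ _ (by omega) this) (by omega)

end

section
variable {V : Type*} [DecidableEq V]

lemma bc_consec {L : Finset (Finset V)} (hlin : IsLinearHG L) {c F w}
    (hbc : IsBC L c F w) (hc3 : 3 ≤ c) :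
    ∀ j < c, F j ∩ F ((j + 1) % c) = {w j} := by
  obtain ⟨hmem, hFinj, hwinj, hlink⟩ := hbc
  intro j hj
  have hlt : (j + 1) % c < c := Nat.mod_lt _ (by omega)
  have hmodeq : (j + 1) % c = if j + 1 < c then j + 1 else 0 := by
    split_ifs with h
    · exact Nat.mod_eq_of_lt h
    · have : j + 1 = c := by omega
      rw [this, Nat.mod_self]
  have hne : (j + 1) % c ≠ j := by rw [hmodeq]; split_ifs <;> omega
  have hFne : F j ≠ F ((j + 1) % c) := hFinj _ hj _ hlt (Ne.symm hne)
  have hcard := hlin _ (hmem j hj) _ (hmem _ hlt) hFne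
  have hwmem := hlink j hj
  apply Finset.eq_singleton_iff_unique_mem.mpr
  refine ⟨hwmem, fun x hx => ?_⟩
  exact Finset.card_le_one.mp hcard x hx (w j) hwmem

lemma bc_pair {L : Finset (Finset V)} (hlin : IsLinearHG L) {c F w}
    (hbc : IsBC L c F w) (hc3 : 3 ≤ c)
    (hminimal : ∀ m (F' : ℕ → Finset V) (w' : ℕ → V), 2 ≤ m → IsBC L m F' w' → c ≤ m)
    {a b : ℕ} (hab : a < b) (hb : b < c) {x : V} (hx : x ∈ F a ∩ F b) :
    x = w a ∨ x = w b := by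
  by_cases h1 : b = a + 1
  · left
    have hcons := bc_consec hlin hbc hc3 a (by omega)
    have hmod : (a + 1) % c = a + 1 := Nat.mod_eq_of_lt (by omega)
    rw [hmod] at hcons
    have hx' : x ∈ F a ∩ F (a + 1) := h1 ▸ hx
    rw [hcons] at hx'
    simpa using hx' 
  · by_cases h2 : a = 0 ∧ b = c - 1
    · right
      have := bc_consec hlin hbc hc3 (c - 1) (by omega)
      have hmod : (c - 1 + 1) % c = 0 := by
        have : c - 1 + 1 = c := by omega
        rw [this, Nat.mod_self]
      rw [hmod] at this
      have hx' : x ∈ F (c - 1) ∩ F 0 := by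
        rw [Finset.inter_comm]
        rw [h2.1, h2.2] at hx
        exact hx
      rw [this] at hx'
      rw [h2.2]
      simpa using hx'
    · exact absurd (bc_nonconsec hbc hc3 hminimal hab hb h1 h2 hx) (fun h => h)

lemma bc_union_card {L : Finset (Finset V)} (hlin : IsLinearHG L) {r c : ℕ} {F w}
    (hbc : IsBC L c F w) (hc3 : 3 ≤ c)
    (hminimal : ∀ m (F' : ℕ → Finset V) (w' : ℕ → V), 2 ≤ m → IsBC L m F' w' → c ≤ m)
    (hunif : ∀ e ∈ L, e.card = r) :
    ((Finset.range c).biUnion F).card = (r - 1) * c := by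
  obtain ⟨hmem, hFinj, hwinj, hlink⟩ := hbc
  have hwF : ∀ j < c, w j ∈ F j := fun j hj => (Finset.mem_inter.mp (hlink j hj)).1
  have hkey : (Finset.range c).biUnion F = (Finset.range c).biUnion (fun j => (F j).erase (w j)) := by
    apply Finset.Subset.antisymm
    · intro x hx
      obtain ⟨j, hj, hxj⟩ := Finset.mem_biUnion.mp hx
      rw [Finset.mem_range] at hj
      by_cases hxw : x = w j
      · have hlt : (j + 1) % c < c := Nat.mod_lt _ (by omega)
        have hne : (j + 1) % c ≠ j := by
          have hmodeq : (j + 1) % c = if j + 1 < c then j + 1 else 0 := by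
            split_ifs with h
            · exact Nat.mod_eq_of_lt h
            · have : j + 1 = c := by omega
              rw [this, Nat.mod_self]
          rw [hmodeq]; split_ifs <;> omega
        refine Finset.mem_biUnion.mpr ⟨(j + 1) % c, Finset.mem_range.mpr hlt, ?_⟩
        refine Finset.mem_erase.mpr ⟨?_, ?_⟩
        · rw [hxw]; exact fun hh => hwinj j hj _ hlt (Ne.symm hne) hh
        · rw [hxw]; exact (Finset.mem_inter.mp (hlink j hj)).2
      · exact Finset.mem_biUnion.mpr ⟨j, Finset.mem_range.mpr hj, Finset.mem_erase.mpr ⟨hxw, hxj⟩⟩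
    · intro x hx
      obtain ⟨j, hj, hxj⟩ := Finset.mem_biUnion.mp hx
      exact Finset.mem_biUnion.mpr ⟨j, hj, Finset.mem_of_mem_erase hxj⟩
  rw [hkey]
  rw [Finset.card_biUnion]
  · have : ∀ j ∈ Finset.range c, ((F j).erase (w j)).card = r - 1 := by
      intro j hj
      rw [Finset.mem_range] at hj
      rw [Finset.card_erase_of_mem (hwF j hj), hunif _ (hmem j hj)]
    rw [Finset.sum_congr rfl this, Finset.sum_const, Finset.card_range, smul_eq_mul, Nat.mul_comm]
  · intro j hj k hk hjk
    rw [Finset.mem_coe, Finset.mem_range] at hj hk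
    rw [Function.onFun, Finset.disjoint_left]
    intro x hxj hxk
    obtain ⟨hxwj, hxFj⟩ := Finset.mem_erase.mp hxj
    obtain ⟨hxwk, hxFk⟩ := Finset.mem_erase.mp hxk
    rcases Nat.lt_or_ge j k with h | h
    · rcases bc_pair hlin ⟨hmem, hFinj, hwinj, hlink⟩ hc3 hminimal h hk
        (Finset.mem_inter.mpr ⟨hxFj, hxFk⟩) with hh | hh
      · exact hxwj hh
      · exact hxwk hh
    · have h' : k < j := by omega
      rcases bc_pair hlin ⟨hmem, hFinj, hwinj, hlink⟩ hc3 hminimal h' hj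
        (Finset.mem_inter.mpr ⟨hxFk, hxFj⟩) with hh | hh
      · exact hxwk hh
      · exact hxwj hh

end


/-- Remark 3.2: a Type-`i` configuration — a linear `r`-graph with `i` edges on at most
`(r-1)i` vertices containing no proper subhypergraph with `3 ≤ e_G < i` edges on at
most `(r-1)e_G` vertices — is a linear cycle `C_i^r`, spanning exactly `(r-1)i` vertices. -/
theorem type_i_configuration_is_linear_cycle {V : Type*} [DecidableEq V]
    (r ℓ i : ℕ) (hr : 3 ≤ r) (hℓ : 3 ≤ ℓ) (hi : 3 ≤ i) (hiℓ : i ≤ ℓ)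
    (L : Finset (Finset V)) (hlin : IsLinearHG L) (hunif : ∀ e ∈ L, e.card = r)
    (hcard : L.card = i) (hv : (L.biUnion id).card ≤ (r - 1) * i)
    (hmin : ∀ G : Finset (Finset V), G ⊆ L → G ≠ L → 3 ≤ G.card → G.card < i →
      ¬ ((G.biUnion id).card ≤ (r - 1) * G.card)) :
    IsLinCycle r L ∧ (L.biUnion id).card = (r - 1) * i := by
  classical
  have hne : L.Nonempty := Finset.card_pos.mp (by omega)
  -- Every edge meets the union of the others in at least 2 vertices.
  have hmd : ∀ f ∈ L, 2 ≤ (f ∩ ((L.erase f).biUnion id)).card := by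
    intro f hf
    have hEcard : (L.erase f).card = i - 1 := by
      rw [Finset.card_erase_of_mem hf, hcard]
    have hE : (r - 1) * (i - 1) + 1 ≤ ((L.erase f).biUnion id).card := by
      rcases Nat.lt_or_ge i 4 with h4 | h4
      · -- i = 3
        have hi3 : i = 3 := by omega
        obtain ⟨e, he, g, hg, heg⟩ := Finset.one_lt_card.mp
          (by rw [hEcard]; omega : 1 < (L.erase f).card)
        have heL : e ∈ L := Finset.mem_of_mem_erase he
        have hgL : g ∈ L := Finset.mem_of_mem_erase hg
        have hint : (e ∩ g).card ≤ 1 := hlin e heL g hgL heg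
        have hcup : 2 * r - 1 ≤ (e ∪ g).card := by
          have := Finset.card_union_add_card_inter e g
          rw [hunif e heL, hunif g hgL] at this
          omega
        have hsub : e ∪ g ⊆ (L.erase f).biUnion id := by
          intro x hx
          rcases Finset.mem_union.mp hx with h | h
          · exact Finset.mem_biUnion.mpr ⟨e, he, h⟩
          · exact Finset.mem_biUnion.mpr ⟨g, hg, h⟩
        have := Finset.card_le_card hsub
        rw [hi3]
        omega
      · -- i ≥ 4: use minimality
        have hne2 : L.erase f ≠ L := by
          intro hh
          have := hEcard
          rw [hh, hcard] at this
          omega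
        have := hmin (L.erase f) (Finset.erase_subset f L) hne2
          (by omega) (by omega)
        rw [hEcard] at this
        omega
    set U := (L.erase f).biUnion id with hU
    have hLU : L.biUnion id = f ∪ U := by
      conv_lhs => rw [← Finset.insert_erase hf]
      rw [Finset.biUnion_insert]
      rfl
    have hcup : (f ∪ U).card ≤ (r - 1) * i := by rw [← hLU]; exact hv
    have hsd : (f \ U).card + U.card = (f ∪ U).card := Finset.card_sdiff_add_card f U
    have hq : (f ∩ U).card + (f \ U).card = f.card := Finset.card_inter_add_card_sdiff f U
    rw [hunif f hf] at hq
    have hb : (f \ U).card ≤ r - 2 := by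
      have h1 : (r - 1) * (i - 1) + 1 ≤ U.card := hE
      have h2 : (r - 1) * (i - 1) + (r - 1) = (r - 1) * i := by
        rw [← Nat.mul_succ]
        congr 1
        omega
      omega
    omega
  -- a Berge cycle exists; take a shortest one
  obtain ⟨c0, F0, w0, hc02, hbc0⟩ := exists_bc hne hmd
  have hQ : ∃ m, 2 ≤ m ∧ ∃ F w, IsBC L m F w := ⟨c0, hc02, F0, w0, hbc0⟩
  set c := Nat.find hQ with hcdef
  obtain ⟨hc2, F, w, hbc⟩ := Nat.find_spec hQ
  have hminimal : ∀ m (F' : ℕ → Finset V) (w' : ℕ → V), 2 ≤ m → IsBC L m F' w' → c ≤ m := by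
    intro m F' w' hm hbc'
    by_contra hlt
    exact Nat.find_min hQ (by omega) ⟨hm, F', w', hbc'⟩
  have hc3 : 3 ≤ c := bc_length_three hlin hbc hc2
  obtain ⟨hmem, hFinj, hwinj, hlink⟩ := hbc
  -- the edge set of the cycle
  set S := (Finset.range c).image F with hSdef
  have hSL : S ⊆ L := by
    intro x hx
    obtain ⟨j, hj, rfl⟩ := Finset.mem_image.mp hx
    exact hmem j (Finset.mem_range.mp hj)
  have hScard : S.card = c := by
    rw [hSdef, Finset.card_image_of_injOn, Finset.card_range]
    intro a ha b hb hab
    simp only [Finset.mem_coe, Finset.mem_range] at ha hb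
    by_contra hne'
    exact hFinj a ha b hb hne' hab
  have hSU : S.biUnion id = (Finset.range c).biUnion F := by
    apply Finset.Subset.antisymm
    · intro x hx
      obtain ⟨g, hg, hxg⟩ := Finset.mem_biUnion.mp hx
      obtain ⟨j, hj, rfl⟩ := Finset.mem_image.mp hg
      exact Finset.mem_biUnion.mpr ⟨j, hj, hxg⟩
    · intro x hx
      obtain ⟨j, hj, hxg⟩ := Finset.mem_biUnion.mp hx
      exact Finset.mem_biUnion.mpr ⟨F j, Finset.mem_image.mpr ⟨j, hj, rfl⟩, hxg⟩
  have hSUcard : (S.biUnion id).card = (r - 1) * c := by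
    rw [hSU]
    exact bc_union_card hlin ⟨hmem, hFinj, hwinj, hlink⟩ hc3 hminimal hunif
  have hci : c = i := by
    have hle : c ≤ i := by
      rw [← hcard, ← hScard]
      exact Finset.card_le_card hSL
    by_contra hcne
    have hlt : c < i := by omega
    have hSne : S ≠ L := by
      intro hh
      rw [hh, hcard] at hScard
      omega
    exact hmin S hSL hSne (by omega) (by omega) (by rw [hSUcard, hScard])
  have hSeqL : S = L := by
    apply Finset.eq_of_subset_of_card_le hSL
    rw [hScard, hcard, hci]
  have hconc2 : (L.biUnion id).card = (r - 1) * i := by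
    rw [← hSeqL, hSUcard, hci]
  refine ⟨⟨F, ?_, ?_, ?_, ?_, ?_⟩, hconc2⟩
  · rw [hcard, ← hci, ← hSeqL]
  · rw [hcard, ← hci]; exact hFinj
  · rw [hcard, ← hci]
    intro j hj
    exact hunif _ (hmem j hj)
  · rw [hcard, ← hci]
    intro j hj
    rw [bc_consec hlin ⟨hmem, hFinj, hwinj, hlink⟩ hc3 j hj]
    exact Finset.card_singleton _
  · rw [hcard, ← hci]
    intro j hj j' hj' hjj' h1 h2
    rw [Finset.eq_empty_iff_forall_notMem]
    intro x hx
    rcases Nat.lt_or_ge j j' with h | h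
    · -- a = j, b = j'
      have hb1 : j' ≠ j + 1 := by
        intro hh
        apply h1
        rw [Nat.mod_eq_of_lt (by omega : j + 1 < c)]
        exact hh
      have hb2 : ¬(j = 0 ∧ j' = c - 1) := by
        rintro ⟨rfl, rfl⟩
        apply h2
        have : c - 1 + 1 = c := by omega
        rw [this, Nat.mod_self]
      exact bc_nonconsec ⟨hmem, hFinj, hwinj, hlink⟩ hc3 hminimal h hj' hb1 hb2 hx
    · have h' : j' < j := by omega
      have hb1 : j ≠ j' + 1 := by
        intro hh
        apply h2
        rw [Nat.mod_eq_of_lt (by omega : j' + 1 < c)]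
        exact hh
      have hb2 : ¬(j' = 0 ∧ j = c - 1) := by
        rintro ⟨rfl, rfl⟩
        apply h1
        have : c - 1 + 1 = c := by omega
        rw [this, Nat.mod_self]
      exact bc_nonconsec ⟨hmem, hFinj, hwinj, hlink⟩ hc3 hminimal h' hj hb1 hb2
        (Finset.inter_comm (F j) (F j') ▸ hx)
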